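/- arXiv:1501.04329 — 10 statements merged into one kernel-verified Lean document; each statement's English description precedes it below -/
import Mathlib

section
/- Let (R, m) be a commutative Artinian local ring with maximal ideal m, let n be a positive integer, and let I be a nonzero principal ideal of R such that I ⊆ m^(n-1) and I ⊄ m^n. Then every ideal of R properly contained in I is contained in I ∩ m^n; consequently the set of ideals of R contained in I is exactly the set of ideals contained in I ∩ m^n together with I itself, so |𝕀(I)| = |𝕀(I ∩ m^n)| + 1. -/
open IsLocalRing

/-- Let (R, m) be a commutative Artinian local ring, n a positive integer,
and I a nonzero principal ideal with I ⊆ m^(n-1) and I ⊄ m^n. Then every ideal properly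
contained in I is contained in I ∩ m^n; consequently 𝕀(I) = 𝕀(I ∩ m^n) ∪ {I} and
|𝕀(I)| = |𝕀(I ∩ m^n)| + 1. -/
theorem stmt_0 (R : Type*) [CommRing R] [IsArtinianRing R] [IsLocalRing R]
    (n : ℕ) (hn : 1 ≤ n) (I : Ideal R) (hI0 : I ≠ ⊥) (hIprin : I.IsPrincipal)
    (hIle : I ≤ maximalIdeal R ^ (n - 1)) (hInle : ¬ I ≤ maximalIdeal R ^ n) :
    (∀ J : Ideal R, J < I → J ≤ I ⊓ maximalIdeal R ^ n) ∧
    {J : Ideal R | J ≤ I} = {J : Ideal R | J ≤ I ⊓ maximalIdeal R ^ n} ∪ {I} ∧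
    Cardinal.mk {J : Ideal R | J ≤ I} =
      Cardinal.mk {J : Ideal R | J ≤ I ⊓ maximalIdeal R ^ n} + 1 := by
  obtain ⟨a, ha⟩ := hIprin.principal
  rw [Ideal.submodule_span_eq] at ha
  have hmn : maximalIdeal R * maximalIdeal R ^ (n - 1) = maximalIdeal R ^ n := by
    rw [← pow_succ']
    congr 1
    omega
  have key : ∀ J : Ideal R, J < I → J ≤ I ⊓ maximalIdeal R ^ n := by
    intro J hJ
    set C := J.colon (Ideal.span {a}) with hC
    have hJC : J ≤ C * Ideal.span {a} := by
      intro x hx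
      have hxI : x ∈ I := le_of_lt hJ hx
      rw [ha, Ideal.mem_span_singleton] at hxI
      obtain ⟨r, rfl⟩ := hxI
      refine Ideal.mul_comm C (Ideal.span {a}) ▸ Ideal.mul_mem_mul
        (Ideal.mem_span_singleton_self a) ?_
      rw [hC, Submodule.mem_colon]
      intro y hy
      replace hy : y ∈ Ideal.span {a} := hy
      rw [Ideal.mem_span_singleton] at hy
      obtain ⟨s, rfl⟩ := hy
      have : r • (a * s) = s • (a * r) := by simp only [smul_eq_mul]; ring
      rw [this]
      exact J.smul_mem s hx
    have hCtop : C ≠ ⊤ := by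
      intro htop
      have : a ∈ J := by
        have h1 : (1 : R) ∈ C := htop ▸ Submodule.mem_top
        rw [hC, Submodule.mem_colon] at h1
        simpa using h1 a (Ideal.mem_span_singleton_self a)
      exact absurd (ha ▸ (Ideal.span_le.mpr (Set.singleton_subset_iff.mpr this)))
        (not_le_of_gt hJ)
    have hCm : C ≤ maximalIdeal R := le_maximalIdeal hCtop
    refine le_inf (le_of_lt hJ) ?_
    calc J ≤ C * Ideal.span {a} := hJC
      _ ≤ maximalIdeal R * (maximalIdeal R ^ (n - 1)) :=
        Ideal.mul_mono hCm (ha ▸ hIle)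
      _ = maximalIdeal R ^ n := hmn
  refine ⟨key, ?_, ?_⟩
  · ext J
    simp only [Set.mem_setOf_eq, Set.mem_union, Set.mem_singleton_iff]
    constructor
    · intro h
      rcases eq_or_lt_of_le h with h' | h'
      · exact Or.inr h'
      · exact Or.inl (key J h')
    · rintro (h | rfl)
      · exact h.trans inf_le_left
      · exact le_rfl
  · have hset : {J : Ideal R | J ≤ I} =
        insert I {J : Ideal R | J ≤ I ⊓ maximalIdeal R ^ n} := by
      ext J
      simp only [Set.mem_setOf_eq, Set.mem_insert_iff]
      constructor
      · intro h
        rcases eq_or_lt_of_le h with h' | h'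
        · exact Or.inl h'
        · exact Or.inr (key J h')
      · rintro (rfl | h)
        · exact le_rfl
        · exact h.trans inf_le_left
    rw [hset, Cardinal.mk_insert]
    intro hmem
    exact hInle ((Set.mem_setOf_eq ▸ hmem).trans inf_le_right)
end

section
/- Let (R, m) be a commutative Noetherian local ring with maximal ideal m, and let x ∈ R be such that the principal ideal Rx contains exactly three ideals of R (i.e., |𝕀(Rx)| = 3, so Rx has exactly one nonzero proper sub-ideal). Then m² ⊆ Ann(x). -/
open IsLocalRing

/-- Nakayama for ideals in a local ring: if m * J = J for a f.g. ideal J, then J = ⊥. -/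
lemma nakayama_bot {R : Type*} [CommRing R] [IsNoetherianRing R] [IsLocalRing R]
    (J : Ideal R) (h : J ≤ maximalIdeal R * J) : J = ⊥ := by
  have := Submodule.eq_bot_of_le_smul_of_le_jacobson_bot (maximalIdeal R) J
    (IsNoetherian.noetherian J) (by rwa [Ideal.smul_eq_mul])
    (IsLocalRing.maximalIdeal_le_jacobson ⊥)
  exact this

/-- Let (R, m) be a commutative Noetherian local ring and x ∈ R such that
the principal ideal Rx contains exactly three ideals of R.  Then m² ⊆ Ann(x). -/
theorem stmt_1 (R : Type*) [CommRing R] [IsNoetherianRing R] [IsLocalRing R]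
    (x : R) (h3 : Nat.card {J : Ideal R | J ≤ Ideal.span {x}} = 3) :
    ∀ a ∈ maximalIdeal R ^ 2, a * x = 0 := by
  set m := maximalIdeal R with hm
  set I := Ideal.span {x} with hI
  -- It suffices to show m^2 * I = ⊥
  suffices hbot : m ^ 2 * I = ⊥ by
    intro a ha
    have : a * x ∈ m ^ 2 * I :=
      Ideal.mul_mem_mul ha (Ideal.subset_span (Set.mem_singleton x))
    rw [hbot] at this
    simpa using this
  by_contra hne
  -- the four distinct ideals ⊥ ⊂ m²I ⊂ mI ⊂ I
  have hMI : m * I ≠ I := by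
    intro h
    apply hne
    have : I = ⊥ := nakayama_bot I h.ge
    rw [this, Ideal.mul_bot]
  have hM2MI : m ^ 2 * I ≠ m * I := by
    intro h
    apply hne
    have h' : m * I ≤ m * (m * I) := by
      rw [← mul_assoc, ← pow_two, h]
    have : m * I = ⊥ := nakayama_bot (m * I) h'
    have hle : m ^ 2 * I ≤ m * I := by
      rw [pow_two, mul_assoc]
      exact Ideal.mul_le_right
    rw [this] at hle
    exact le_bot_iff.mp hle
  have hle1 : m ^ 2 * I ≤ m * I := by
    rw [pow_two, mul_assoc]; exact Ideal.mul_le_right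
  have hle2 : m * I ≤ I := Ideal.mul_le_right
  have hM2I : m ^ 2 * I ≠ I := by
    intro h
    exact hMI (le_antisymm hle2 (h.ge.trans hle1))
  have hbotMI : (⊥ : Ideal R) ≠ m * I := by
    intro h
    apply hne
    rw [pow_two, mul_assoc, ← h, Ideal.mul_bot]
  have hbotI : (⊥ : Ideal R) ≠ I := by
    intro h
    apply hne
    rw [← h, Ideal.mul_bot]
  -- finiteness of the set
  have hfin : ({J : Ideal R | J ≤ I}).Finite := by
    rw [← Set.not_infinite]
    intro hinf
    rw [Set.infinite_coe_iff.symm] at hinf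
    rw [Nat.card_eq_zero_of_infinite] at h3
    exact absurd h3 (by norm_num)
  have hsub : ({⊥, m ^ 2 * I, m * I, I} : Set (Ideal R)) ⊆ {J : Ideal R | J ≤ I} := by
    rintro J (rfl | rfl | rfl | rfl)
    · exact Set.mem_setOf_eq ▸ bot_le
    · exact Set.mem_setOf_eq ▸ hle1.trans hle2
    · exact Set.mem_setOf_eq ▸ hle2
    · exact Set.mem_setOf_eq ▸ le_rfl
  have h1 : (⊥ : Ideal R) ∉ ({m ^ 2 * I, m * I, I} : Set (Ideal R)) := by
    intro hmem
    simp only [Set.mem_insert_iff, Set.mem_singleton_iff] at hmem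
    rcases hmem with h | h | h
    exacts [hne h.symm, hbotMI h, hbotI h]
  have h2 : m ^ 2 * I ∉ ({m * I, I} : Set (Ideal R)) := by
    intro hmem
    simp only [Set.mem_insert_iff, Set.mem_singleton_iff] at hmem
    rcases hmem with h | h
    exacts [hM2MI h, hM2I h]
  have h3' : m * I ∉ ({I} : Set (Ideal R)) := by
    intro hmem
    simp only [Set.mem_singleton_iff] at hmem
    exact hMI hmem
  have hcard4 : ({⊥, m ^ 2 * I, m * I, I} : Set (Ideal R)).ncard = 4 := by
    rw [Set.ncard_insert_of_notMem h1 (Set.toFinite _),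
        Set.ncard_insert_of_notMem h2 (Set.toFinite _),
        Set.ncard_insert_of_notMem h3' (Set.toFinite _),
        Set.ncard_singleton]
  have : ({⊥, m ^ 2 * I, m * I, I} : Set (Ideal R)).ncard ≤ ({J : Ideal R | J ≤ I}).ncard :=
    Set.ncard_le_ncard hsub hfin
  rw [hcard4, ← Nat.card_coe_set_eq, h3] at this
  omega
end

section
/- Let R be a commutative ring and let z ∈ R. If only finitely many ideals of R are contained in the principal ideal Rz and only finitely many ideals of R are contained in Ann(z), then R is an Artinian ring. -/
/-- A submodule of `R` with only finitely many submodules below it is an Artinian module. -/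
lemma aux_artinian_of_finite (R : Type*) [CommRing R] (p : Submodule R R)
    (h : {I : Submodule R R | I ≤ p}.Finite) : IsArtinian R p := by
  have : Finite {I : Submodule R R // I ≤ p} := h.to_subtype
  have : Finite (Submodule R p) :=
    Finite.of_equiv _ (Submodule.MapSubtype.orderIso p).symm.toEquiv
  exact ⟨Finite.wellFounded_of_trans_of_irrefl _⟩

/-- Let R be a commutative ring and z ∈ R.  If only finitely many ideals of
R are contained in Rz and only finitely many ideals of R are contained in
Ann(z) = {a ∈ R : a·z = 0}, then R is Artinian. -/
theorem stmt_5 (R : Type*) [CommRing R] (z : R)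
    (h1 : {I : Ideal R | I ≤ Ideal.span {z}}.Finite)
    (h2 : {I : Ideal R | I ≤ Submodule.colon ⊥ ((Ideal.span {z} : Ideal R) : Set R)}.Finite) :
    IsArtinianRing R := by
  set A := Submodule.colon (⊥ : Ideal R) ((Ideal.span {z} : Ideal R) : Set R) with hA
  have hker : LinearMap.ker (LinearMap.toSpanSingleton R R z) = A := by
    ext a
    simp only [LinearMap.mem_ker, LinearMap.toSpanSingleton_apply, hA,
      Submodule.mem_colon, Submodule.mem_bot]
    constructor
    · intro h p hp
      obtain ⟨c, rfl⟩ := Ideal.mem_span_singleton'.mp hp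
      simp only [smul_eq_mul] at h ⊢
      rw [show a * (c * z) = c * (a * z) by ring, h, mul_zero]
    · intro h
      have := h z (Ideal.mem_span_singleton_self z)
      simpa using this
  have hrange : LinearMap.range (LinearMap.toSpanSingleton R R z) = Ideal.span {z} := by
    rw [← LinearMap.span_singleton_eq_range]
  have hart1 : IsArtinian R (Ideal.span {z} : Ideal R) := aux_artinian_of_finite R _ h1
  have hart2 : IsArtinian R A := aux_artinian_of_finite R _ h2
  have hart1' : IsArtinian R (LinearMap.range (LinearMap.toSpanSingleton R R z)) := by
    rw [hrange]; exact hart1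
  exact isArtinian_of_range_eq_ker A.subtype
    (LinearMap.toSpanSingleton R R z).rangeRestrict
    (by rw [Submodule.range_subtype, LinearMap.ker_rangeRestrict, hker])
end

section
/- Let (R, m) be a commutative Artinian local ring with maximal ideal m, and let t be a positive integer with m^t ≠ (0) and m^(t+1) = (0). If the R/m-vector space Ann(m) has dimension 1, then Ann(m) = m^t and m^t is the unique minimal nonzero ideal of R; that is, every nonzero ideal of R contains m^t. -/
set_option maxHeartbeats 1000000

open IsLocalRing

/-- Let (R, m) be a commutative Artinian local ring, t a positive integer
with m^t ≠ (0) and m^(t+1) = (0).  If the R/m-vector space Ann(m) has dimension 1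
(Ann(m) is annihilated by m, so Ann(m) = Ann(m)/m·Ann(m) is an R/m-vector space), then
Ann(m) = m^t and m^t is the unique minimal nonzero ideal of R. -/
theorem stmt_6 (R : Type*) [CommRing R] [IsArtinianRing R] [IsLocalRing R]
    (t : ℕ) (ht : 1 ≤ t) (ht0 : maximalIdeal R ^ t ≠ ⊥)
    (ht1 : maximalIdeal R ^ (t + 1) = ⊥)
    (hdim : Module.finrank (R ⧸ maximalIdeal R)
      ((↥(Submodule.colon (⊥ : Ideal R) (maximalIdeal R))) ⧸
        (maximalIdeal R •
          (⊤ : Submodule R ↥(Submodule.colon (⊥ : Ideal R) (maximalIdeal R))))) = 1) :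
    Submodule.colon (⊥ : Ideal R) (maximalIdeal R) = maximalIdeal R ^ t ∧
      ∀ I : Ideal R, I ≠ ⊥ → maximalIdeal R ^ t ≤ I := by
  classical
  set m := maximalIdeal R with hm
  set A : Ideal R := Submodule.colon (⊥ : Ideal R) m with hA
  -- every element of A kills m
  have hannA : ∀ a ∈ A, ∀ p ∈ m, a * p = 0 := by
    intro a ha p hp
    have := Submodule.mem_colon.mp ha p hp
    simpa using this
  -- m ^ t ≤ A
  have hmtA : m ^ t ≤ A := by
    intro a ha
    rw [hA, Submodule.mem_colon]
    intro p hp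
    have : a * p ∈ m ^ (t + 1) := by
      rw [pow_succ]
      exact Ideal.mul_mem_mul ha hp
    simpa [ht1] using this
  -- the submodule m • ⊤ of A is ⊥
  have hNbot : (m • (⊤ : Submodule R A)) = ⊥ := by
    rw [eq_bot_iff]
    refine Submodule.smul_le.mpr ?_
    intro r hr n _
    rw [Submodule.mem_bot]
    ext
    show r * (n : R) = 0
    rw [mul_comm]
    exact hannA _ n.2 r hr
  -- key: any nonzero element of A generates A
  have key : ∀ x : R, x ∈ A → x ≠ 0 → A ≤ Ideal.span {x} := by
    intro x hx hx0
    set xv : A := ⟨x, hx⟩ with hxv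
    have hmkx : (Submodule.Quotient.mk (p := m • (⊤ : Submodule R A)) xv) ≠ 0 := by
      rw [Ne, Submodule.Quotient.mk_eq_zero, hNbot, Submodule.mem_bot]
      intro h
      exact hx0 (congrArg Subtype.val h)
    haveI : m.IsMaximal := IsLocalRing.maximalIdeal.isMaximal R
    letI : Field (R ⧸ m) := Ideal.Quotient.field m
    have hall := (@finrank_eq_one_iff_of_nonzero' (R ⧸ m) _ _ _
      (Module.instQuotientIdealSubmoduleHSMulTop (↥A) m) _ hmkx).mp hdim
    intro y hy
    obtain ⟨c, hc⟩ := hall (Submodule.Quotient.mk (p := m • (⊤ : Submodule R A)) ⟨y, hy⟩)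
    obtain ⟨r, rfl⟩ := Ideal.Quotient.mk_surjective c
    rw [Module.Quotient.mk_smul_mk] at hc
    have : r • xv - ⟨y, hy⟩ ∈ (m • (⊤ : Submodule R A)) := by
      rw [← Submodule.Quotient.mk_eq_zero, Submodule.Quotient.mk_sub, hc, sub_self]
    rw [hNbot, Submodule.mem_bot] at this
    have hyx : y = r * x := by
      have := congrArg Subtype.val this
      have h2 : r * x - y = 0 := by simpa [hxv] using this
      exact (sub_eq_zero.mp h2).symm
    rw [Ideal.mem_span_singleton]
    exact ⟨r, by rw [hyx, mul_comm]⟩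
  -- A = m ^ t
  obtain ⟨x, hxmt, hx0⟩ := Submodule.exists_mem_ne_zero_of_ne_bot ht0
  have hAmt : A = m ^ t :=
    le_antisymm ((key x (hmtA hxmt) hx0).trans
      ((Ideal.span_singleton_le_iff_mem _).mpr hxmt)) hmtA
  refine ⟨hAmt, ?_⟩
  -- minimality
  intro I hI
  obtain ⟨z, hzI, hz0⟩ := Submodule.exists_mem_ne_zero_of_ne_bot hI
  have hPt : Ideal.span {z} * m ^ (t + 1) = ⊥ := by
    rw [ht1, Ideal.mul_bot]
  have hPex : ∃ j, Ideal.span {z} * m ^ (j + 1) = ⊥ := ⟨t, hPt⟩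
  set j := Nat.find hPex with hj
  have hJbot : Ideal.span {z} * m ^ (j + 1) = ⊥ := Nat.find_spec hPex
  have hJne : Ideal.span {z} * m ^ j ≠ ⊥ := by
    rcases Nat.eq_zero_or_pos j with h0 | hpos
    · rw [h0, pow_zero, mul_one, Ne, Ideal.span_singleton_eq_bot]
      exact hz0
    · have := Nat.find_min hPex (Nat.sub_lt hpos one_pos)
      rw [← hj] at this
      have e : j - 1 + 1 = j := by omega
      rwa [e] at this
  -- J := span{z} * m^j is a nonzero ideal contained in A and in I
  set J := Ideal.span {z} * m ^ j with hJ
  have hJA : J ≤ A := by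
    intro a ha
    rw [hA, Submodule.mem_colon]
    intro p hp
    have : a * p ∈ Ideal.span {z} * m ^ (j + 1) := by
      rw [pow_succ, ← mul_assoc]
      exact Ideal.mul_mem_mul ha hp
    simpa [hJbot] using this
  have hJI : J ≤ I := by
    calc J ≤ Ideal.span {z} := Ideal.mul_le_inf.trans inf_le_left
    _ ≤ I := (Ideal.span_singleton_le_iff_mem _).mpr hzI
  obtain ⟨y, hyJ, hy0⟩ := Submodule.exists_mem_ne_zero_of_ne_bot hJne
  calc m ^ t = A := hAmt.symm
  _ ≤ Ideal.span {y} := key y (hJA hyJ) hy0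
  _ ≤ J := (Ideal.span_singleton_le_iff_mem _).mpr hyJ
  _ ≤ I := hJI
end

section
/- Let (R, m) be a commutative Artinian local ring with maximal ideal m such that m³ = (0), m² ≠ (0), the R/m-vector space m/m² has dimension 2, and the R/m-vector space Ann(m) has dimension 1. Then every nonzero proper ideal of R other than m is a principal ideal. -/
set_option maxHeartbeats 1000000

open IsLocalRing

/-- Auxiliary: if the annihilator of the maximal ideal has residue dimension 1,
then every nonzero ideal contained in it is equal to it. -/
lemma aux_ann {R : Type*} [CommRing R] [IsLocalRing R]
    (hdimann : Module.finrank (R ⧸ maximalIdeal R)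
      ((↥(Submodule.colon (⊥ : Ideal R) (maximalIdeal R))) ⧸
        (maximalIdeal R •
          (⊤ : Submodule R ↥(Submodule.colon (⊥ : Ideal R) (maximalIdeal R))))) = 1)
    (I : Ideal R) (hle : I ≤ Submodule.colon (⊥ : Ideal R) (maximalIdeal R))
    (hne : I ≠ ⊥) : I = Submodule.colon (⊥ : Ideal R) (maximalIdeal R) := by
  letI : Field (R ⧸ maximalIdeal R) := Ideal.Quotient.field (maximalIdeal R)
  set A := Submodule.colon (⊥ : Ideal R) (maximalIdeal R) with hAdef
  obtain ⟨z, hzI, hz0⟩ := Submodule.exists_mem_ne_zero_of_ne_bot hne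
  have hzA : z ∈ A := hle hzI
  have hbot : (maximalIdeal R • ⊤ : Submodule R ↥A) = ⊥ := by
    rw [eq_bot_iff]
    intro w hw
    rw [Submodule.mem_smul_top_iff, Ideal.smul_eq_mul] at hw
    have hle' : maximalIdeal R * A ≤ ⊥ := Ideal.mul_le.mpr fun r hr a ha => by
      simpa [smul_eq_mul, mul_comm] using (Submodule.mem_colon.mp ha) r hr
    have : (w : R) = 0 := (Submodule.mem_bot R).mp (hle' hw)
    exact (Submodule.mem_bot _).mpr (Subtype.ext this)
  have hzq : (Submodule.Quotient.mk (⟨z, hzA⟩ : ↥A) :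
      (↥A) ⧸ (maximalIdeal R • (⊤ : Submodule R ↥A))) ≠ 0 := by
    rw [Ne, Submodule.Quotient.mk_eq_zero, hbot, Submodule.mem_bot]
    intro h
    exact hz0 (by simpa using congrArg Subtype.val h)
  have hspan := (finrank_eq_one_iff_of_nonzero (K := R ⧸ maximalIdeal R) _ hzq).mp hdimann
  refine le_antisymm hle ?_
  intro a ha
  have : (Submodule.Quotient.mk (⟨a, ha⟩ : ↥A) :
      (↥A) ⧸ (maximalIdeal R • (⊤ : Submodule R ↥A))) ∈
      Submodule.span (R ⧸ maximalIdeal R) {Submodule.Quotient.mk (⟨z, hzA⟩ : ↥A)} := by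
    rw [hspan]; trivial
  rw [Submodule.mem_span_singleton] at this
  obtain ⟨c, hc⟩ := this
  obtain ⟨r, rfl⟩ := Ideal.Quotient.mk_surjective c
  rw [Module.Quotient.mk_smul_mk, Submodule.Quotient.eq, hbot, Submodule.mem_bot] at hc
  have hz' : r • z - a = 0 := by simpa using congrArg Subtype.val hc
  have ha' : a = r * z := by
    rw [← smul_eq_mul]
    exact (sub_eq_zero.mp hz').symm
  rw [ha']
  exact I.mul_mem_left r hzI

/-- Let (R, m) be a commutative Artinian local ring with m³ = (0),
m² ≠ (0), v.dim_{R/m} (m/m²) = 2 and v.dim_{R/m} Ann(m) = 1.  Then every nonzero proper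
ideal of R other than m is principal. -/
theorem stmt_7 (R : Type*) [CommRing R] [IsArtinianRing R] [IsLocalRing R]
    (h3 : maximalIdeal R ^ 3 = ⊥) (h2 : maximalIdeal R ^ 2 ≠ ⊥)
    (hdim2 : Module.finrank (R ⧸ maximalIdeal R)
      ((↥(maximalIdeal R)) ⧸
        (maximalIdeal R • (⊤ : Submodule R ↥(maximalIdeal R)))) = 2)
    (hdimann : Module.finrank (R ⧸ maximalIdeal R)
      ((↥(Submodule.colon (⊥ : Ideal R) (maximalIdeal R))) ⧸
        (maximalIdeal R •
          (⊤ : Submodule R ↥(Submodule.colon (⊥ : Ideal R) (maximalIdeal R))))) = 1) :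
    ∀ I : Ideal R, I ≠ ⊥ → I ≠ ⊤ → I ≠ maximalIdeal R → I.IsPrincipal := by
  intro I hIbot hItop hIm
  letI : Field (R ⧸ maximalIdeal R) := Ideal.Quotient.field (maximalIdeal R)
  have hIle : I ≤ maximalIdeal R := le_maximalIdeal hItop
  have hm2A : maximalIdeal R ^ 2 ≤ Submodule.colon (⊥ : Ideal R) (maximalIdeal R) := by
    intro x hx
    rw [Submodule.mem_colon]
    intro p hp
    have : x * p ∈ maximalIdeal R ^ 3 := by
      rw [pow_succ]
      exact Ideal.mul_mem_mul hx hp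
    rw [h3] at this
    have hxp : x * p = 0 := by simpa using this
    rw [smul_eq_mul, Submodule.mem_bot]
    exact hxp
  have hA2 : maximalIdeal R ^ 2 = Submodule.colon (⊥ : Ideal R) (maximalIdeal R) := aux_ann hdimann _ hm2A h2
  by_cases hI2 : I ≤ maximalIdeal R ^ 2
  · -- I ≤ m²; then I = A is principal
    have hIA : I = Submodule.colon (⊥ : Ideal R) (maximalIdeal R) := aux_ann hdimann I (hI2.trans hA2.le) hIbot
    obtain ⟨z, hzA, hz0⟩ := Submodule.exists_mem_ne_zero_of_ne_bot
      (show Submodule.colon (⊥ : Ideal R) (maximalIdeal R) ≠ ⊥ from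
        fun h => h2 (by rw [hA2, h]))
    have hspA : Ideal.span {z} = Submodule.colon (⊥ : Ideal R) (maximalIdeal R) := by
      refine aux_ann hdimann _ ?_ ?_
      · rw [Ideal.span_le, Set.singleton_subset_iff]; exact hzA
      · simpa [Ne, Ideal.span_singleton_eq_bot] using hz0
    exact ⟨⟨z, by rw [hIA, ← hspA]⟩⟩
  · obtain ⟨x, hxI, hxm2⟩ := SetLike.not_le_iff_exists.mp hI2
    have hxm : x ∈ maximalIdeal R := hIle hxI
    -- m² ≤ span {x}
    have hmx_le : maximalIdeal R * Ideal.span {x} ≤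
        Submodule.colon (⊥ : Ideal R) (maximalIdeal R) := by
      rw [← hA2, pow_two]
      exact Ideal.mul_mono_right (by rwa [Ideal.span_le, Set.singleton_subset_iff])
    have hmx_ne : maximalIdeal R * Ideal.span {x} ≠ ⊥ := by
      intro h
      apply hxm2
      rw [hA2, Submodule.mem_colon]
      intro p hp
      have hpx : p * x ∈ maximalIdeal R * Ideal.span {x} :=
        Ideal.mul_mem_mul hp (Ideal.subset_span rfl)
      rw [h] at hpx
      rw [smul_eq_mul, Submodule.mem_bot, mul_comm]
      exact (Submodule.mem_bot R).mp hpx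
    have hm2x : maximalIdeal R ^ 2 ≤ Ideal.span {x} := by
      rw [hA2, ← aux_ann hdimann _ hmx_le hmx_ne]
      exact Ideal.mul_le_right
    -- claim: I = span {x}
    refine ⟨⟨x, ?_⟩⟩
    refine le_antisymm ?_ ((Submodule.span_singleton_le_iff_mem x I).mpr hxI)
    intro y hyI
    by_contra hy
    have hym : y ∈ maximalIdeal R := hIle hyI
    set Q := (↥(maximalIdeal R)) ⧸ (maximalIdeal R • (⊤ : Submodule R ↥(maximalIdeal R)))
    set xx : ↥(maximalIdeal R) := ⟨x, hxm⟩ with hxxdef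
    set yy : ↥(maximalIdeal R) := ⟨y, hym⟩ with hyydef
    have mem_iff : ∀ w : ↥(maximalIdeal R),
        w ∈ (maximalIdeal R • (⊤ : Submodule R ↥(maximalIdeal R))) ↔
          (w : R) ∈ maximalIdeal R ^ 2 := by
      intro w
      rw [Submodule.mem_smul_top_iff, Ideal.smul_eq_mul, ← pow_two]
    have hx0 : (Submodule.Quotient.mk xx : Q) ≠ 0 := by
      rw [Ne, Submodule.Quotient.mk_eq_zero]
      intro h
      exact hxm2 ((mem_iff xx).mp h)
    have hnyx : ∀ a : R ⧸ maximalIdeal R,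
        a • (Submodule.Quotient.mk xx : Q) ≠ Submodule.Quotient.mk yy := by
      intro a h
      obtain ⟨r, rfl⟩ := Ideal.Quotient.mk_surjective a
      rw [Module.Quotient.mk_smul_mk, Submodule.Quotient.eq] at h
      have h2' : r * x - y ∈ maximalIdeal R ^ 2 := by
        have := (mem_iff _).mp h
        simpa [smul_eq_mul] using this
      apply hy
      have hyeq : y = r * x - (r * x - y) := by ring
      rw [hyeq]
      exact Submodule.sub_mem _ (Ideal.mul_mem_left _ r (Ideal.subset_span rfl)) (hm2x h2')
    have hli : LinearIndependent (R ⧸ maximalIdeal R)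
        ![(Submodule.Quotient.mk yy : Q), Submodule.Quotient.mk xx] :=
      linearIndependent_fin2.mpr ⟨by simpa using hx0, by simpa using hnyx⟩
    have hsp : Submodule.span (R ⧸ maximalIdeal R)
        (Set.range ![(Submodule.Quotient.mk yy : Q), Submodule.Quotient.mk xx]) = ⊤ :=
      hli.span_eq_top_of_card_eq_finrank (by simp [hdim2])
    have hmle : maximalIdeal R ≤ I ⊔ maximalIdeal R ^ 2 := by
      intro w hw
      have hw' : (Submodule.Quotient.mk (⟨w, hw⟩ : ↥(maximalIdeal R)) : Q) ∈
          Submodule.span (R ⧸ maximalIdeal R)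
            {(Submodule.Quotient.mk yy : Q), Submodule.Quotient.mk xx} := by
        have hrange : Set.range ![(Submodule.Quotient.mk yy : Q), Submodule.Quotient.mk xx] =
            {(Submodule.Quotient.mk yy : Q), Submodule.Quotient.mk xx} := by
          ext t
          simp [Fin.exists_fin_two, eq_comm, or_comm]
        rw [← hrange, hsp]
        trivial
      rw [Submodule.mem_span_pair] at hw'
      obtain ⟨a, b, hab⟩ := hw'
      obtain ⟨r, rfl⟩ := Ideal.Quotient.mk_surjective a
      obtain ⟨s, rfl⟩ := Ideal.Quotient.mk_surjective b
      rw [Module.Quotient.mk_smul_mk, Module.Quotient.mk_smul_mk,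
        ← Submodule.Quotient.mk_add, Submodule.Quotient.eq] at hab
      have hu : r * y + s * x - w ∈ maximalIdeal R ^ 2 := by
        have := (mem_iff _).mp hab
        simpa [smul_eq_mul] using this
      have hw2 : w = (r * y + s * x) - (r * y + s * x - w) := by ring
      rw [hw2]
      refine Submodule.sub_mem _ ?_ (Submodule.mem_sup_right hu)
      exact Submodule.mem_sup_left
        (Submodule.add_mem _ (Ideal.mul_mem_left _ r hyI) (Ideal.mul_mem_left _ s hxI))
    -- Nakayama-type contradiction
    have hm2I : maximalIdeal R ^ 2 ≤ I := by
      calc maximalIdeal R ^ 2 = maximalIdeal R * maximalIdeal R := sq (maximalIdeal R)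
        _ ≤ maximalIdeal R * (I ⊔ maximalIdeal R ^ 2) := Ideal.mul_mono_right hmle
        _ = maximalIdeal R * I ⊔ maximalIdeal R * maximalIdeal R ^ 2 := Ideal.mul_sup _ _ _
        _ ≤ I ⊔ ⊥ := sup_le_sup Ideal.mul_le_right (by
              rw [show maximalIdeal R * maximalIdeal R ^ 2 = maximalIdeal R ^ 3 by ring, h3])
        _ = I := sup_bot_eq I
    exact hIm (le_antisymm hIle (hmle.trans (sup_le le_rfl hm2I)))
end

section
/- Let (R, m) be a commutative Artinian local ring with maximal ideal m such that m³ = (0), m² ≠ (0), the R/m-vector space m/m² has dimension 2, and the R/m-vector space Ann(m) has dimension 1. Then for every nonzero proper ideal I of R with I ≠ m and I ≠ m², the ideals of R contained in I are exactly (0), m², and I; that is, 𝕀(I) = {(0), m², I}, so I contains exactly one nonzero proper sub-ideal, namely m². -/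
open IsLocalRing

/-- Auxiliary: an `R`-submodule of `M ⧸ I•⊤` is also an `R⧸I`-submodule. -/
def stmt8ToKSub {R : Type*} [CommRing R] (Idl : Ideal R) {M : Type*} [AddCommGroup M]
    [Module R M] (N : Submodule R (M ⧸ (Idl • ⊤ : Submodule R M))) :
    Submodule (R ⧸ Idl) (M ⧸ (Idl • ⊤ : Submodule R M)) where
  carrier := N
  add_mem' := fun h1 h2 => N.add_mem h1 h2
  zero_mem' := N.zero_mem
  smul_mem' := by
    intro c q hq
    obtain ⟨r, rfl⟩ := Ideal.Quotient.mk_surjective c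
    obtain ⟨z, rfl⟩ := Submodule.Quotient.mk_surjective _ q
    rw [Module.Quotient.mk_smul_mk, Submodule.Quotient.mk_smul]
    exact N.smul_mem r hq

@[simp] lemma stmt8ToKSub_mem {R : Type*} [CommRing R] (Idl : Ideal R) {M : Type*}
    [AddCommGroup M] [Module R M] (N : Submodule R (M ⧸ (Idl • ⊤ : Submodule R M)))
    (x : M ⧸ (Idl • ⊤ : Submodule R M)) : x ∈ stmt8ToKSub Idl N ↔ x ∈ N := Iff.rfl

/-- Let (R, m) be a commutative Artinian local ring with m³ = (0),
m² ≠ (0), v.dim_{R/m} (m/m²) = 2 and v.dim_{R/m} Ann(m) = 1.  Then for every nonzero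
proper ideal I of R with I ≠ m and I ≠ m², the ideals of R contained in I are exactly
(0), m², and I. -/
theorem stmt_8 (R : Type*) [CommRing R] [IsArtinianRing R] [IsLocalRing R]
    (h3 : maximalIdeal R ^ 3 = ⊥) (h2 : maximalIdeal R ^ 2 ≠ ⊥)
    (hdim2 : Module.finrank (R ⧸ maximalIdeal R)
      ((↥(maximalIdeal R)) ⧸
        (maximalIdeal R • (⊤ : Submodule R ↥(maximalIdeal R)))) = 2)
    (hdimann : Module.finrank (R ⧸ maximalIdeal R)
      ((↥(Submodule.colon (⊥ : Ideal R) (maximalIdeal R))) ⧸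
        (maximalIdeal R •
          (⊤ : Submodule R ↥(Submodule.colon (⊥ : Ideal R) (maximalIdeal R))))) = 1) :
    ∀ I : Ideal R, I ≠ ⊥ → I ≠ ⊤ → I ≠ maximalIdeal R → I ≠ maximalIdeal R ^ 2 →
      {J : Ideal R | J ≤ I} = {⊥, maximalIdeal R ^ 2, I} := by
  intro I hI0 hIT hIm hIm2
  set m : Ideal R := maximalIdeal R with hmdef
  letI : Field (R ⧸ m) := Ideal.Quotient.field m
  -- m² ≤ Ann(m)
  have hm2A : m ^ 2 ≤ Submodule.colon (⊥ : Ideal R) m := by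
    intro x hx
    rw [Submodule.mem_colon]
    intro p hp
    have hxp : x * p ∈ m ^ 3 := by
      rw [pow_succ]
      exact Ideal.mul_mem_mul hx hp
    rw [h3] at hxp
    simpa using hxp
  -- Ann(m) is "one-dimensional": spanned by any nonzero element
  have hAspan : ∀ y ∈ Submodule.colon (⊥ : Ideal R) m, y ≠ 0 →
      ∀ a ∈ Submodule.colon (⊥ : Ideal R) m, ∃ r : R, a = r * y := by
    intro y hy hy0 a ha
    have hsmul : (m • ⊤ : Submodule R ↥(Submodule.colon (⊥ : Ideal R) m)) = ⊥ := by
      rw [eq_bot_iff]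
      refine Submodule.smul_le.mpr ?_
      intro r hr n _
      have hval : r • (n : R) = 0 := by
        have h := (Submodule.mem_colon.mp n.2) r hr
        rw [Submodule.mem_bot] at h
        rw [smul_eq_mul, mul_comm]
        exact h
      rw [Submodule.mem_bot]
      exact Subtype.ext (by rw [SetLike.val_smul]; exact hval)
    have hv0 : (Submodule.Quotient.mk (⟨y, hy⟩ : ↥(Submodule.colon (⊥ : Ideal R) m)) :
        ↥(Submodule.colon (⊥ : Ideal R) m) ⧸
          (m • ⊤ : Submodule R ↥(Submodule.colon (⊥ : Ideal R) m))) ≠ 0 := by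
      intro h
      rw [Submodule.Quotient.mk_eq_zero, hsmul, Submodule.mem_bot] at h
      exact hy0 (by simpa using congrArg Subtype.val h)
    obtain ⟨c, hc⟩ := (finrank_eq_one_iff_of_nonzero' _ hv0).mp hdimann
      (Submodule.Quotient.mk ⟨a, ha⟩)
    obtain ⟨r, rfl⟩ := Ideal.Quotient.mk_surjective c
    refine ⟨r, ?_⟩
    rw [Module.Quotient.mk_smul_mk] at hc
    have hd := (Submodule.Quotient.eq _).mp hc
    rw [hsmul, Submodule.mem_bot, sub_eq_zero] at hd
    have hd' := congrArg Subtype.val hd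
    simpa [eq_comm] using hd'
  -- every nonzero element generates an ideal meeting Ann(m) nontrivially
  have hsocle : ∀ x : R, x ≠ 0 → ∃ y : R, y ≠ 0 ∧ y ∈ Submodule.colon (⊥ : Ideal R) m ∧
      ∃ r : R, y = r * x := by
    intro x hx
    by_cases h1 : ∀ p ∈ m, x * p = 0
    · exact ⟨x, hx, Submodule.mem_colon.mpr (by simpa using h1), 1, (one_mul x).symm⟩
    · push_neg at h1
      obtain ⟨p, hp, hpx⟩ := h1
      by_cases hq2 : ∀ q ∈ m, (x * p) * q = 0
      · exact ⟨x * p, hpx, Submodule.mem_colon.mpr (by simpa using hq2), p, mul_comm x p⟩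
      · push_neg at hq2
        obtain ⟨q, hq, hqx⟩ := hq2
        refine ⟨x * p * q, hqx, Submodule.mem_colon.mpr ?_, p * q, by ring⟩
        intro t ht
        have hmem : (p * q) * t ∈ m ^ 3 := by
          rw [pow_succ, pow_two]
          exact Ideal.mul_mem_mul (Ideal.mul_mem_mul hp hq) ht
        rw [h3, Submodule.mem_bot] at hmem
        have : (x * p * q) • t = 0 := by
          rw [smul_eq_mul]
          calc x * p * q * t = x * ((p * q) * t) := by ring
          _ = 0 := by rw [hmem, mul_zero]
        rw [this]
        exact Submodule.zero_mem _
  -- every nonzero ideal contains m²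
  have hcontains : ∀ J : Ideal R, J ≠ ⊥ → m ^ 2 ≤ J := by
    intro J hJ
    obtain ⟨x, hxJ, hx0⟩ := J.ne_bot_iff.mp hJ
    obtain ⟨y, hy0, hyA, r, rfl⟩ := hsocle x hx0
    intro a haM2
    obtain ⟨s, hs⟩ := hAspan _ hyA hy0 a (hm2A haM2)
    rw [hs]
    exact J.mul_mem_left s (J.mul_mem_left r hxJ)
  have hIleM : I ≤ m := IsLocalRing.le_maximalIdeal hIT
  -- membership in m•⊤ corresponds to membership in m²
  have hmap : Submodule.map m.subtype (m • (⊤ : Submodule R ↥m)) = m ^ 2 := by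
    rw [Submodule.map_smul'', Submodule.map_subtype_top, Ideal.smul_eq_mul, ← pow_two]
  -- the key step using dim m/m² = 2
  have key : ∀ J : Ideal R, m ^ 2 ≤ J → J ≤ I → J ≠ m ^ 2 → I ≤ J := by
    intro J hm2J hJI hJne
    haveI : FiniteDimensional (R ⧸ m)
        ((↥m) ⧸ (m • (⊤ : Submodule R ↥m))) :=
      FiniteDimensional.of_finrank_pos (by rw [hdim2]; norm_num)
    obtain ⟨y, hyJ, hym2⟩ := SetLike.exists_of_lt (lt_of_le_of_ne hm2J (Ne.symm hJne))
    have hyM : y ∈ m := hIleM (hJI hyJ)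
    set π := (m • (⊤ : Submodule R ↥m)).mkQ with hπ
    set v := π ⟨y, hyM⟩ with hv
    have hv0 : v ≠ 0 := by
      intro h
      rw [hv, Submodule.mkQ_apply, Submodule.Quotient.mk_eq_zero] at h
      exact hym2 (hmap ▸ ⟨_, h, rfl⟩)
    set WI := stmt8ToKSub m (Submodule.map π (Submodule.comap m.subtype I)) with hWI
    have hvWI : v ∈ WI := ⟨⟨y, hyM⟩, hJI hyJ, rfl⟩
    have hWItop : WI ≠ ⊤ := by
      intro htop
      have hmI : m ≤ I := by
        intro x hx
        have hx' : π ⟨x, hx⟩ ∈ WI := htop ▸ Submodule.mem_top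
        obtain ⟨w, hw, hwx⟩ := hx'
        have hsub : ((⟨x, hx⟩ : ↥m) - w : ↥m) ∈ m • (⊤ : Submodule R ↥m) := by
          rw [← Submodule.Quotient.mk_eq_zero]
          have : π ((⟨x, hx⟩ : ↥m) - w) = 0 := by
            rw [map_sub, hwx, sub_self]
          exact this
        have hsub2 : x - (w : R) ∈ m ^ 2 := hmap ▸ ⟨_, hsub, rfl⟩
        have : x = (x - (w : R)) + (w : R) := by ring
        rw [this]
        exact I.add_mem (le_trans hm2J hJI hsub2) hw
      exact hIm (le_antisymm hIleM hmI)
    have hWIlt : WI < ⊤ := lt_of_le_of_ne le_top hWItop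
    have hfr : Module.finrank (R ⧸ m) WI < 2 := by
      have := Submodule.finrank_lt (K := R ⧸ m) hWIlt.ne
      rwa [hdim2] at this
    have hspan : Submodule.span (R ⧸ m) {v} = WI := by
      apply Submodule.eq_of_le_of_finrank_le
      · rw [Submodule.span_le, Set.singleton_subset_iff]
        exact hvWI
      · rw [finrank_span_singleton hv0]
        omega
    intro a haI
    have haM : a ∈ m := hIleM haI
    have hmem : π ⟨a, haM⟩ ∈ WI := ⟨⟨a, haM⟩, haI, rfl⟩
    rw [← hspan] at hmem
    obtain ⟨c, hc⟩ := Submodule.mem_span_singleton.mp hmem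
    obtain ⟨r, rfl⟩ := Ideal.Quotient.mk_surjective c
    have hc' : Submodule.Quotient.mk (r • (⟨y, hyM⟩ : ↥m)) =
        (Submodule.Quotient.mk ⟨a, haM⟩ :
          (↥m) ⧸ (m • (⊤ : Submodule R ↥m))) := by
      rw [← Module.Quotient.mk_smul_mk]
      exact hc
    have hd := (Submodule.Quotient.eq _).mp hc'
    have hd2 : r * y - a ∈ m ^ 2 := by
      refine hmap ▸ ⟨_, hd, ?_⟩
      simp
    have ha' : a = r * y - (r * y - a) := by ring
    rw [ha']
    exact J.sub_mem (J.mul_mem_left r hyJ) (hm2J hd2)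
  -- assemble
  ext J
  simp only [Set.mem_setOf_eq, Set.mem_insert_iff, Set.mem_singleton_iff]
  constructor
  · intro hJI
    by_cases hJ0 : J = ⊥
    · exact Or.inl hJ0
    by_cases hJm2 : J = m ^ 2
    · exact Or.inr (Or.inl hJm2)
    · exact Or.inr (Or.inr (le_antisymm hJI (key J (hcontains J hJ0) hJI hJm2)))
  · rintro (rfl | rfl | h)
    · exact bot_le
    · exact hcontains I hI0
    · exact le_of_eq h
end

section
/- Let (R, m) be a commutative Artinian local ring with maximal ideal m such that m³ = (0), m² ≠ (0), the R/m-vector space m/m² has dimension 2, and the R/m-vector space Ann(m) has dimension 1. Then every nonzero proper ideal I of R with I ≠ m² has degree at most 2 in the annihilating-ideal graph of R; that is, the set {J : J is a nonzero proper ideal of R, J ≠ I, and IJ = (0)} has at most two elements. -/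
open IsLocalRing


open IsLocalRing

section Aux

variable {R : Type*} [CommRing R]

/-- Turn an `R`-submodule of a module with a compatible `R ⧸ m` action into an
`R ⧸ m`-submodule. -/
private def kify (m : Ideal R) {M : Type*} [AddCommGroup M] [Module R M]
    [Module (R ⧸ m) M] [IsScalarTower R (R ⧸ m) M] (p : Submodule R M) :
    Submodule (R ⧸ m) M where
  carrier := p
  add_mem' := fun ha hb => p.add_mem ha hb
  zero_mem' := p.zero_mem
  smul_mem' := by
    intro c x hx
    obtain ⟨r, rfl⟩ := Ideal.Quotient.mk_surjective c
    have h : (Ideal.Quotient.mk m r) • x = r • x := by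
      rw [← Ideal.Quotient.algebraMap_eq m, algebraMap_smul]
    rw [h]; exact p.smul_mem r hx

private lemma mem_kify {m : Ideal R} {M : Type*} [AddCommGroup M] [Module R M]
    [Module (R ⧸ m) M] [IsScalarTower R (R ⧸ m) M] {p : Submodule R M} {x : M} :
    x ∈ kify m p ↔ x ∈ p := Iff.rfl

end Aux

section Main

variable (R : Type*) [CommRing R] [IsLocalRing R]

/-- the annihilator of the maximal ideal is killed by the maximal ideal -/
private lemma smul_top_ann_eq_bot :
    (maximalIdeal R • (⊤ : Submodule R ↥(Submodule.colon (⊥ : Ideal R) (maximalIdeal R)))) = ⊥ := by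
  rw [eq_bot_iff]
  refine Submodule.smul_le.2 fun r hr a _ => ?_
  have h := (Submodule.mem_bot R).1 (Submodule.mem_colon.mp a.2 r hr)
  rw [Submodule.mem_bot]
  apply Subtype.ext
  show r • (a : R) = 0
  rw [smul_eq_mul, mul_comm]
  simpa using h

/-- From `dim Ann(m) = 1`: any nonzero ideal inside `Ann(m)` equals `Ann(m)`. -/
private lemma ann_le
    (hdimann : Module.finrank (R ⧸ maximalIdeal R)
      ((↥(Submodule.colon (⊥ : Ideal R) (maximalIdeal R))) ⧸
        (maximalIdeal R •
          (⊤ : Submodule R ↥(Submodule.colon (⊥ : Ideal R) (maximalIdeal R))))) = 1)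
    (J : Ideal R) (hJle : J ≤ Submodule.colon (⊥ : Ideal R) (maximalIdeal R)) (hJ0 : J ≠ ⊥) :
    Submodule.colon (⊥ : Ideal R) (maximalIdeal R) ≤ J := by
  set A := Submodule.colon (⊥ : Ideal R) (maximalIdeal R) with hA
  have hbot : (maximalIdeal R • (⊤ : Submodule R ↥A)) = ⊥ := smul_top_ann_eq_bot R
  set N := (maximalIdeal R • (⊤ : Submodule R ↥A)) with hN
  -- the k-submodule image of J
  set Jc : Submodule R ↥A := Submodule.comap A.subtype (J : Submodule R R) with hJc
  set Jk := kify (maximalIdeal R) (Submodule.map N.mkQ Jc) with hJk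
  letI : Field (R ⧸ maximalIdeal R) := Ideal.Quotient.field _
  haveI hsimple : IsSimpleModule (R ⧸ maximalIdeal R) (↥A ⧸ N) :=
    isSimpleModule_iff_finrank_eq_one.mpr hdimann
  have hJkbot : Jk ≠ ⊥ := by
    obtain ⟨a, haJ, ha0⟩ := Submodule.exists_mem_ne_zero_of_ne_bot hJ0
    have haA : a ∈ A := hJle haJ
    refine Submodule.ne_bot_iff _ |>.2 ⟨N.mkQ ⟨a, haA⟩, ?_, ?_⟩
    · exact Submodule.mem_map_of_mem (f := N.mkQ) (by simpa [hJc] using haJ)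
    · intro h
      rw [Submodule.mkQ_apply, Submodule.Quotient.mk_eq_zero, hbot] at h
      exact ha0 (by simpa using congrArg (Subtype.val) ((Submodule.mem_bot R).1 h))
  have hJktop : Jk = ⊤ := (eq_bot_or_eq_top Jk).resolve_left hJkbot
  intro a ha
  have : N.mkQ ⟨a, ha⟩ ∈ Jk := by rw [hJktop]; trivial
  rw [hJk, mem_kify] at this
  have h2 : (⟨a, ha⟩ : ↥A) ∈ Submodule.comap N.mkQ (Submodule.map N.mkQ Jc) := this
  rw [Submodule.comap_map_mkQ, hbot, bot_sup_eq] at h2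
  simpa [hJc] using h2

end Main

section Main2

variable (R : Type*) [CommRing R] [IsLocalRing R]

set_option synthInstance.maxHeartbeats 1000000 in
private lemma annx_eq
    (h3 : maximalIdeal R ^ 3 = ⊥)
    (hdim2 : Module.finrank (R ⧸ maximalIdeal R)
      ((↥(maximalIdeal R)) ⧸
        (maximalIdeal R • (⊤ : Submodule R ↥(maximalIdeal R)))) = 2)
    (hAnn : Submodule.colon (⊥ : Ideal R) (maximalIdeal R) = maximalIdeal R ^ 2)
    (x : R) (hxm : x ∈ maximalIdeal R) (hxm2 : x ∉ maximalIdeal R ^ 2)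
    (J : Ideal R) (hJm : J ≤ maximalIdeal R)
    (hJle : J ≤ Submodule.colon (⊥ : Ideal R) (Ideal.span {x}))
    (hm2J : maximalIdeal R ^ 2 ≤ J)
    (y : R) (hyJ : y ∈ J) (hym2 : y ∉ maximalIdeal R ^ 2) :
    J = Submodule.colon (⊥ : Ideal R) (Ideal.span {x}) := by
  set N := (maximalIdeal R • (⊤ : Submodule R ↥(maximalIdeal R))) with hNdef
  have hN : N = Submodule.comap (maximalIdeal R).subtype (maximalIdeal R ^ 2 : Ideal R) := by
    apply Submodule.map_injective_of_injective (Submodule.injective_subtype (maximalIdeal R))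
    have hmap : Submodule.map (maximalIdeal R).subtype N = maximalIdeal R ^ 2 := by
      rw [hNdef, Submodule.map_smul'', Submodule.map_subtype_top, Ideal.smul_eq_mul, ← pow_two]
    have hmap2 : Submodule.map (maximalIdeal R).subtype
        (Submodule.comap (maximalIdeal R).subtype (maximalIdeal R ^ 2 : Ideal R))
        = maximalIdeal R ^ 2 := by
      rw [Submodule.map_comap_subtype]
      exact inf_eq_right.mpr (Ideal.pow_le_self two_ne_zero)
    rw [hmap, hmap2]
  have memT : ∀ (T : Ideal R), maximalIdeal R ^ 2 ≤ T →
      ∀ z (hz : z ∈ maximalIdeal R),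
      (N.mkQ ⟨z, hz⟩ ∈ Submodule.map N.mkQ
        (Submodule.comap (maximalIdeal R).subtype (T : Submodule R R)) ↔ z ∈ T) := by
    intro T hT z hz
    constructor
    · intro h
      have h2 : (⟨z, hz⟩ : ↥(maximalIdeal R)) ∈ Submodule.comap N.mkQ
          (Submodule.map N.mkQ (Submodule.comap (maximalIdeal R).subtype (T : Submodule R R))) := h
      rw [Submodule.comap_map_mkQ, sup_eq_right.mpr] at h2
      · exact h2
      · rw [hN]; exact Submodule.comap_mono hT
    · intro h; exact Submodule.mem_map_of_mem (f := N.mkQ) h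
  have hm2Ax : maximalIdeal R ^ 2 ≤ Submodule.colon (⊥ : Ideal R) (Ideal.span {x}) := by
    intro a ha
    rw [Ideal.mem_colon_span_singleton]
    rw [← h3, pow_succ]
    exact Ideal.mul_mem_mul ha hxm
  have hAxT : Submodule.colon (⊥ : Ideal R) (Ideal.span {x}) ≠ ⊤ := by
    intro h
    have h1 : (1 : R) ∈ Submodule.colon (⊥ : Ideal R) (Ideal.span {x}) := h ▸ trivial
    rw [Ideal.mem_colon_span_singleton, one_mul, Ideal.mem_bot] at h1
    exact hxm2 (h1 ▸ (maximalIdeal R ^ 2).zero_mem)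
  have hAxm : Submodule.colon (⊥ : Ideal R) (Ideal.span {x}) ≤ maximalIdeal R :=
    le_maximalIdeal hAxT
  have ht : ∃ t, t ∈ maximalIdeal R ∧ t ∉ Submodule.colon (⊥ : Ideal R) (Ideal.span {x}) := by
    by_contra hcon
    push_neg at hcon
    apply hxm2
    rw [← hAnn]
    refine Submodule.mem_colon.mpr fun p hp => ?_
    have := Ideal.mem_colon_span_singleton.mp (hcon p hp)
    rw [smul_eq_mul, mul_comm]
    exact this
  set Wk := kify (maximalIdeal R) (Submodule.map N.mkQ
    (Submodule.comap (maximalIdeal R).subtype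
      ((Submodule.colon (⊥ : Ideal R) (Ideal.span {x})) : Submodule R R))) with hWk
  set Jk := kify (maximalIdeal R) (Submodule.map N.mkQ
    (Submodule.comap (maximalIdeal R).subtype (J : Submodule R R))) with hJk
  letI : Field (R ⧸ maximalIdeal R) := Ideal.Quotient.field _
  haveI hFD : Module.Finite (R ⧸ maximalIdeal R)
      ((↥(maximalIdeal R)) ⧸ N) :=
    Module.finite_of_finrank_pos (by rw [hdim2]; norm_num)
  have hJW : Jk ≤ Wk := fun z hz =>
    mem_kify.mpr (Submodule.map_mono (Submodule.comap_mono hJle) (mem_kify.mp hz))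
  have hWtop : Wk ≠ ⊤ := by
    obtain ⟨t, htm, htA⟩ := ht
    intro h
    have hmem : N.mkQ ⟨t, htm⟩ ∈ Wk := by rw [h]; trivial
    rw [hWk, mem_kify] at hmem
    exact htA ((memT _ hm2Ax t htm).mp hmem)
  have hJbot : Jk ≠ ⊥ := by
    have hyJm : y ∈ maximalIdeal R := hJm hyJ
    refine (Submodule.ne_bot_iff _).2 ⟨N.mkQ ⟨y, hyJm⟩,
      mem_kify.mpr ((memT J hm2J y hyJm).mpr hyJ), ?_⟩
    intro h
    rw [Submodule.mkQ_apply, Submodule.Quotient.mk_eq_zero, hN] at h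
    exact hym2 h
  have hW2 : Module.finrank (R ⧸ maximalIdeal R) ↥Wk < 2 :=
    hdim2 ▸ Submodule.finrank_lt hWtop
  haveI : Nontrivial ↥Jk := Submodule.nontrivial_iff_ne_bot.2 hJbot
  have hJ1 : 0 < Module.finrank (R ⧸ maximalIdeal R) ↥Jk := Module.finrank_pos
  have hE : Jk = Wk := Submodule.eq_of_le_of_finrank_le hJW (by omega)
  apply le_antisymm hJle
  intro a ha
  have ham : a ∈ maximalIdeal R := hAxm ha
  have h1 : N.mkQ ⟨a, ham⟩ ∈ Wk := mem_kify.mpr ((memT _ hm2Ax a ham).mpr ha)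
  rw [← hE, hJk, mem_kify] at h1
  exact (memT J hm2J a ham).mp h1

end Main2


/-- Let (R, m) be a commutative Artinian local ring with m³ = (0),
m² ≠ (0), v.dim_{R/m} (m/m²) = 2 and v.dim_{R/m} Ann(m) = 1.  Then every nonzero proper
ideal I ≠ m² has degree at most 2 in the annihilating-ideal graph of R: the set of
nonzero proper ideals J ≠ I with IJ = (0) has at most two elements. -/
theorem stmt_9 (R : Type*) [CommRing R] [IsArtinianRing R] [IsLocalRing R]
    (h3 : maximalIdeal R ^ 3 = ⊥) (h2 : maximalIdeal R ^ 2 ≠ ⊥)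
    (hdim2 : Module.finrank (R ⧸ maximalIdeal R)
      ((↥(maximalIdeal R)) ⧸
        (maximalIdeal R • (⊤ : Submodule R ↥(maximalIdeal R)))) = 2)
    (hdimann : Module.finrank (R ⧸ maximalIdeal R)
      ((↥(Submodule.colon (⊥ : Ideal R) (maximalIdeal R))) ⧸
        (maximalIdeal R •
          (⊤ : Submodule R ↥(Submodule.colon (⊥ : Ideal R) (maximalIdeal R))))) = 1) :
    ∀ I : Ideal R, I ≠ ⊥ → I ≠ ⊤ → I ≠ maximalIdeal R ^ 2 →
      ∃ A B : Ideal R,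
        {J : Ideal R | J ≠ ⊥ ∧ J ≠ ⊤ ∧ J ≠ I ∧ I * J = ⊥} ⊆ {A, B} := by
  intro I hI0 hIT hIm2
  have hAnnle : maximalIdeal R ^ 2 ≤ Submodule.colon (⊥ : Ideal R) (maximalIdeal R) := by
    intro a ha
    refine Submodule.mem_colon.mpr fun p hp => ?_
    rw [smul_eq_mul]
    rw [show (⊥ : Ideal R) = maximalIdeal R ^ 3 from h3.symm, pow_succ]
    exact Ideal.mul_mem_mul ha hp
  have hAnn : Submodule.colon (⊥ : Ideal R) (maximalIdeal R) = maximalIdeal R ^ 2 :=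
    le_antisymm (ann_le R hdimann _ hAnnle h2) hAnnle
  have hsimp : ∀ J : Ideal R, J ≤ maximalIdeal R ^ 2 → J ≠ ⊥ → J = maximalIdeal R ^ 2 := by
    intro J h1 h0
    refine le_antisymm h1 ?_
    rw [← hAnn]
    exact ann_le R hdimann J (hAnn ▸ h1) h0
  have hIm : I ≤ maximalIdeal R := le_maximalIdeal hIT
  have hx : ∃ x ∈ I, x ∉ maximalIdeal R ^ 2 := by
    by_contra h
    push_neg at h
    exact hIm2 (hsimp I h hI0)
  obtain ⟨x, hxI, hxm2⟩ := hx
  refine ⟨maximalIdeal R ^ 2, Submodule.colon (⊥ : Ideal R) (Ideal.span {x}), ?_⟩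
  rintro J ⟨hJ0, hJT, hJI, hIJ⟩
  have hJm : J ≤ maximalIdeal R := le_maximalIdeal hJT
  have hJAx : J ≤ Submodule.colon (⊥ : Ideal R) (Ideal.span {x}) := by
    intro j hj
    rw [Ideal.mem_colon_span_singleton]
    have hmem : x * j ∈ I * J := Ideal.mul_mem_mul hxI hj
    rw [hIJ] at hmem
    simpa [mul_comm] using hmem
  simp only [Set.mem_insert_iff, Set.mem_singleton_iff]
  by_cases hc : J ≤ maximalIdeal R ^ 2
  · exact Or.inl (hsimp J hc hJ0)
  · obtain ⟨y, hyJ, hym2⟩ := SetLike.not_le_iff_exists.mp hc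
    have hyAnn : maximalIdeal R * Ideal.span {y} ≠ ⊥ := by
      intro hbot
      apply hym2
      rw [← hAnn]
      refine Submodule.mem_colon.mpr fun p hp => ?_
      have hmem : p * y ∈ maximalIdeal R * Ideal.span {y} :=
        Ideal.mul_mem_mul hp (Ideal.mem_span_singleton_self y)
      rw [hbot] at hmem
      rw [smul_eq_mul, mul_comm]
      exact hmem
    have hle1 : maximalIdeal R * Ideal.span {y} ≤ maximalIdeal R ^ 2 := by
      rw [pow_two]
      exact Ideal.mul_mono le_rfl ((Ideal.span_le).mpr (Set.singleton_subset_iff.mpr (hJm hyJ)))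
    have hle2 : maximalIdeal R * Ideal.span {y} ≤ J :=
      le_trans (Ideal.mul_mono le_rfl ((Ideal.span_le).mpr (Set.singleton_subset_iff.mpr hyJ)))
        Ideal.mul_le_right
    have hm2J : maximalIdeal R ^ 2 ≤ J := by
      rw [← hsimp _ hle1 hyAnn]
      exact hle2
    exact Or.inr (annx_eq R h3 hdim2 hAnn x (hIm hxI) hxm2 J hJm hJAx hm2J y hyJ hym2)
end

section
/- Let (R, m) be a commutative local ring with maximal ideal m whose residue field R/m is infinite, and let k be a nonnegative integer such that the R/m-vector space m^k/m^(k+1) has dimension at least 2. Then there are infinitely many ideals J of R with m^(k+1) ⊆ J ⊆ m^k; in particular, the set 𝕀(m^k) of ideals of R contained in m^k is infinite. -/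
open IsLocalRing

-- Infinitely many subspaces in a vector space of rank ≥ 2 over an infinite field
theorem aux_inf_submodule (K V : Type*) [CommRing K] [Nontrivial K] [Infinite K] [AddCommGroup V]
    [Module K V] (hdim : 2 ≤ Module.rank K V) : Infinite (Submodule K V) := by
  obtain ⟨f, hf⟩ := exists_linearIndependent_of_le_rank (by exact_mod_cast hdim)
  set x := f 0; set y := f 1
  have hpair : LinearIndependent K ![x, y] := by
    have : ![x, y] = f := by ext i; fin_cases i <;> rfl
    rwa [this]
  rw [LinearIndependent.pair_iff] at hpair
  refine Infinite.of_injective (fun c : K => Submodule.span K {x + c • y}) ?_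
  intro c d h
  simp only at h
  have hx : x + c • y ∈ Submodule.span K {x + d • y} := by
    rw [← h]; exact Submodule.mem_span_singleton_self _
  rw [Submodule.mem_span_singleton] at hx
  obtain ⟨a, ha⟩ := hx
  rw [smul_add, smul_smul] at ha
  have : (a - 1) • x + (a * d - c) • y = 0 := by
    have : (a - 1) • x + (a * d - c) • y = (a • x + (a * d) • y) - (x + c • y) := by
      rw [sub_smul, sub_smul, one_smul]; abel
    rw [this, ha, sub_self]
  obtain ⟨h1, h2⟩ := hpair _ _ this
  have ha1 : a = 1 := by linear_combination h1
  rw [ha1, one_mul] at h2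
  linear_combination -h2

/-- Let (R, m) be a commutative local ring with infinite residue field
R/m, and k a nonnegative integer with v.dim_{R/m} (m^k/m^(k+1)) ≥ 2.  Then there are
infinitely many ideals J of R with m^(k+1) ⊆ J ⊆ m^k; in particular the set of ideals
of R contained in m^k is infinite. -/
theorem stmt_10 (R : Type*) [CommRing R] [IsLocalRing R]
    [Infinite (R ⧸ maximalIdeal R)] (k : ℕ)
    (hdim : 2 ≤ Module.rank (R ⧸ maximalIdeal R)
      ((↥(maximalIdeal R ^ k)) ⧸
        (maximalIdeal R • (⊤ : Submodule R ↥(maximalIdeal R ^ k))))) :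
    {J : Ideal R | maximalIdeal R ^ (k + 1) ≤ J ∧ J ≤ maximalIdeal R ^ k}.Infinite ∧
      {J : Ideal R | J ≤ maximalIdeal R ^ k}.Infinite := by
  let m := maximalIdeal R
  let I : Ideal R := m ^ k
  haveI : Infinite (Submodule (R ⧸ m) ((↥I) ⧸ (m • (⊤ : Submodule R ↥I)))) :=
    aux_inf_submodule _ _ hdim
  set π : ↥I →ₗ[R] ((↥I) ⧸ (m • (⊤ : Submodule R ↥I))) :=
    (m • (⊤ : Submodule R ↥I)).mkQ with hπ
  set g : Submodule (R ⧸ m) ((↥I) ⧸ (m • (⊤ : Submodule R ↥I))) → Ideal R :=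
    fun S => Submodule.map I.subtype ((S.restrictScalars R).comap π) with hg
  have hginj : Function.Injective g := by
    intro S T h
    have h2 : (S.restrictScalars R).comap π = (T.restrictScalars R).comap π :=
      Submodule.map_injective_of_injective I.injective_subtype h
    have h3 : ∀ U : Submodule (R ⧸ m) ((↥I) ⧸ (m • (⊤ : Submodule R ↥I))),
        Submodule.map π ((U.restrictScalars R).comap π) = U.restrictScalars R := by
      intro U
      rw [Submodule.map_comap_eq, hπ, Submodule.range_mkQ, top_inf_eq]
    have := (h3 S).symm.trans (congrArg (Submodule.map π) h2) |>.trans (h3 T)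
    exact Submodule.restrictScalars_injective R _ _ this
  have hmem : ∀ S, m ^ (k + 1) ≤ g S ∧ g S ≤ m ^ k := by
    intro S
    constructor
    · have hNle : (m • (⊤ : Submodule R ↥I)) ≤ (S.restrictScalars R).comap π := by
        intro x hx
        have hx0 : π x = 0 := by
          rw [hπ]
          rwa [← Submodule.Quotient.mk_eq_zero (m • (⊤ : Submodule R ↥I))] at hx
        simp [Submodule.mem_comap, hx0]
      have hmapN : Submodule.map I.subtype (m • (⊤ : Submodule R ↥I)) = m ^ (k + 1) := by
        rw [Submodule.map_smul'', Submodule.map_top, Submodule.range_subtype,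
          Ideal.smul_eq_mul, ← pow_succ']
      calc m ^ (k + 1) = Submodule.map I.subtype (m • (⊤ : Submodule R ↥I)) := hmapN.symm
        _ ≤ g S := Submodule.map_mono hNle
    · exact Submodule.map_subtype_le I _
  have hinf1 : {J : Ideal R | m ^ (k + 1) ≤ J ∧ J ≤ m ^ k}.Infinite :=
    Set.infinite_of_injective_forall_mem (f := g) hginj hmem
  exact ⟨hinf1, hinf1.mono (fun J hJ => hJ.2)⟩
end

section
/- Let (R, m) be a commutative Artinian local ring with maximal ideal m whose residue field R/m is infinite, such that m⁴ = (0), m³ ≠ (0), the R/m-vector space Ann(m) has dimension 1, the R/m-vector space m/m² has dimension 2, and the R/m-vector space m²/m³ has dimension 1. Then infinitely many ideals of R are contained in Ann(m²); that is, the set 𝕀(Ann(m²)) is infinite. -/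
open IsLocalRing

lemma aux_mk_eq_zero {R : Type*} [CommRing R] (I N : Ideal R) (x : R) (hx : x ∈ N) :
    (Submodule.Quotient.mk (⟨x, hx⟩ : ↥N) : ↥N ⧸ (I • (⊤ : Submodule R ↥N))) = 0 ↔ x ∈ I * N := by
  rw [Submodule.Quotient.mk_eq_zero]
  constructor
  · intro h
    have := Submodule.mem_map_of_mem (f := N.subtype) h
    rwa [Submodule.map_smul'', Submodule.map_top, Submodule.range_subtype,
      Ideal.smul_eq_mul] at this
  · intro h
    have hx' : x ∈ Submodule.map N.subtype (I • (⊤ : Submodule R ↥N)) := by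
      rwa [Submodule.map_smul'', Submodule.map_top, Submodule.range_subtype, Ideal.smul_eq_mul]
    obtain ⟨y, hy, hyx⟩ := hx'
    have : y = ⟨x, hx⟩ := Subtype.ext hyx
    rwa [this] at hy

set_option maxHeartbeats 1000000 in
lemma aux_onedim {R : Type*} [CommRing R] [IsLocalRing R] (N : Ideal R)
    (hdim : Module.finrank (R ⧸ maximalIdeal R)
      ((↥N) ⧸ (maximalIdeal R • (⊤ : Submodule R ↥N))) = 1)
    {v : R} (hv : v ∈ N) (hv' : v ∉ maximalIdeal R * N) {w : R} (hw : w ∈ N) :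
    ∃ c : R, w - c * v ∈ maximalIdeal R * N := by
  letI : Field (R ⧸ maximalIdeal R) := Ideal.Quotient.field _
  set Q := (↥N) ⧸ (maximalIdeal R • (⊤ : Submodule R ↥N))
  set vb : Q := Submodule.Quotient.mk ⟨v, hv⟩ with hvb
  have hvb0 : vb ≠ 0 := by
    rw [hvb, Ne, aux_mk_eq_zero]; exact hv'
  have hspan : Submodule.span (R ⧸ maximalIdeal R) {vb} = ⊤ :=
    (finrank_eq_one_iff_of_nonzero (K := R ⧸ maximalIdeal R) vb hvb0).mp hdim
  have hwmem : (Submodule.Quotient.mk ⟨w, hw⟩ : Q) ∈ Submodule.span (R ⧸ maximalIdeal R) {vb} := by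
    rw [hspan]; trivial
  obtain ⟨c, hc⟩ := Submodule.mem_span_singleton.mp hwmem
  obtain ⟨c₀, rfl⟩ := Ideal.Quotient.mk_surjective c
  refine ⟨c₀, ?_⟩
  have key : (Submodule.Quotient.mk (⟨w - c₀ * v, sub_mem hw (N.mul_mem_left _ hv)⟩ : ↥N) : Q) = 0 := by
    have h1 : (⟨w - c₀ * v, sub_mem hw (N.mul_mem_left _ hv)⟩ : ↥N)
        = ⟨w, hw⟩ - c₀ • ⟨v, hv⟩ := by
      ext; simp [smul_eq_mul]
    rw [h1, Submodule.Quotient.mk_sub, ← Module.Quotient.mk_smul_mk, hc, sub_self]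
  rwa [aux_mk_eq_zero] at key

set_option maxHeartbeats 1000000 in
lemma aux_twodim {R : Type*} [CommRing R] [IsLocalRing R] (N : Ideal R)
    (hdim : Module.finrank (R ⧸ maximalIdeal R)
      ((↥N) ⧸ (maximalIdeal R • (⊤ : Submodule R ↥N))) = 2) :
    ∃ z0 z1 : R, z0 ∈ N ∧ z1 ∈ N ∧
      ∀ a c : R, a * z0 + c * z1 ∈ maximalIdeal R * N →
        a ∈ maximalIdeal R ∧ c ∈ maximalIdeal R := by
  letI : Field (R ⧸ maximalIdeal R) := Ideal.Quotient.field _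
  set Q := (↥N) ⧸ (maximalIdeal R • (⊤ : Submodule R ↥N)) with hQ
  have hQnt : Nontrivial Q :=
    Module.nontrivial_of_finrank_pos (R := R ⧸ maximalIdeal R) (by rw [hdim]; norm_num)
  obtain ⟨q, hq⟩ := exists_ne (0 : Q)
  obtain ⟨⟨z0, hz0N⟩, hz0q⟩ := Submodule.Quotient.mk_surjective _ q
  have hz0 : z0 ∉ maximalIdeal R * N := by
    rw [← aux_mk_eq_zero (maximalIdeal R) N z0 hz0N, hz0q]
    exact hq
  have hz1ex : ∃ z1 ∈ N, ∀ e : R, z1 - e * z0 ∉ maximalIdeal R * N := by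
    by_contra h
    push_neg at h
    have hvb0 : (Submodule.Quotient.mk ⟨z0, hz0N⟩ : Q) ≠ 0 := by rw [hz0q]; exact hq
    have hspan : Submodule.span (R ⧸ maximalIdeal R)
        {(Submodule.Quotient.mk ⟨z0, hz0N⟩ : Q)} = ⊤ := by
      rw [Submodule.eq_top_iff']
      intro q'
      obtain ⟨⟨w, hw⟩, rfl⟩ := Submodule.Quotient.mk_surjective _ q'
      obtain ⟨e, he⟩ := h w hw
      rw [Submodule.mem_span_singleton]
      refine ⟨Ideal.Quotient.mk _ e, ?_⟩
      rw [Module.Quotient.mk_smul_mk]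
      rw [← sub_eq_zero, ← Submodule.Quotient.mk_sub]
      have h1 : ((⟨e * z0, N.mul_mem_left e hz0N⟩ : ↥N) - ⟨w, hw⟩)
          = ⟨e * z0 - w, sub_mem (N.mul_mem_left e hz0N) hw⟩ := rfl
      have h2 : (e • (⟨z0, hz0N⟩ : ↥N)) = ⟨e * z0, N.mul_mem_left e hz0N⟩ := by
        ext; simp [smul_eq_mul]
      rw [h2, h1, aux_mk_eq_zero]
      have : e * z0 - w = -(w - e * z0) := by ring
      rw [this]
      exact neg_mem he
    have := (finrank_eq_one_iff_of_nonzero (K := R ⧸ maximalIdeal R) _ hvb0).mpr hspan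
    rw [hdim] at this
    omega
  obtain ⟨z1, hz1N, hz1⟩ := hz1ex
  refine ⟨z0, z1, hz0N, hz1N, ?_⟩
  intro a c hac
  have hunit : ∀ y : R, y ∉ maximalIdeal R → ∃ d : R, d * y = 1 := by
    intro y hy
    have hu : IsUnit y := by
      by_contra hnu
      exact hy ((IsLocalRing.mem_maximalIdeal _).mpr (mem_nonunits_iff.mpr hnu))
    obtain ⟨d, hd⟩ := hu.exists_left_inv
    exact ⟨d, hd⟩
  have hc : c ∈ maximalIdeal R := by
    by_contra hcm
    obtain ⟨d, hd⟩ := hunit c hcm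
    refine hz1 (-(d * a)) ?_
    have : z1 - -(d * a) * z0 = d * (a * z0 + c * z1) := by linear_combination (-z1) * hd
    rw [this]
    exact Ideal.mul_mem_left _ _ hac
  refine ⟨?_, hc⟩
  by_contra ham
  obtain ⟨d, hd⟩ := hunit a ham
  refine hz0 ?_
  have haz : a * z0 ∈ maximalIdeal R * N := by
    have h1 : c * z1 ∈ maximalIdeal R * N := Ideal.mul_mem_mul hc hz1N
    have : a * z0 = (a * z0 + c * z1) - c * z1 := by ring
    rw [this]
    exact sub_mem hac h1
  have : z0 = d * (a * z0) := by linear_combination (-z0) * hd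
  rw [this]
  exact Ideal.mul_mem_left _ _ haz

set_option maxHeartbeats 2000000 in
/-- Let (R, m) be a commutative Artinian local ring with infinite residue
field, m⁴ = (0), m³ ≠ (0), v.dim_{R/m} Ann(m) = 1, v.dim_{R/m} (m/m²) = 2 and
v.dim_{R/m} (m²/m³) = 1.  Then infinitely many ideals of R are contained in Ann(m²). -/
theorem stmt_11 (R : Type*) [CommRing R] [IsArtinianRing R] [IsLocalRing R]
    [Infinite (R ⧸ maximalIdeal R)]
    (h4 : maximalIdeal R ^ 4 = ⊥) (h3 : maximalIdeal R ^ 3 ≠ ⊥)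
    (hdimann : Module.finrank (R ⧸ maximalIdeal R)
      ((↥(Submodule.colon (⊥ : Ideal R) (maximalIdeal R))) ⧸
        (maximalIdeal R •
          (⊤ : Submodule R ↥(Submodule.colon (⊥ : Ideal R) (maximalIdeal R))))) = 1)
    (hdim1 : Module.finrank (R ⧸ maximalIdeal R)
      ((↥(maximalIdeal R)) ⧸
        (maximalIdeal R • (⊤ : Submodule R ↥(maximalIdeal R)))) = 2)
    (hdim2 : Module.finrank (R ⧸ maximalIdeal R)
      ((↥(maximalIdeal R ^ 2)) ⧸
        (maximalIdeal R • (⊤ : Submodule R ↥(maximalIdeal R ^ 2)))) = 1) :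
    {I : Ideal R | I ≤ Submodule.colon (⊥ : Ideal R) ((maximalIdeal R ^ 2 : Ideal R) : Set R)}.Infinite := by
  classical
  set m : Ideal R := maximalIdeal R with hm
  have h23 : m * m ^ 2 = m ^ 3 := by ring
  have h33 : m * m ^ 3 = ⊥ := by
    have h : m * m ^ 3 = m ^ 4 := by ring
    rw [h, h4]
  have h22 : m ^ 2 * m ^ 2 = ⊥ := by
    have h : m ^ 2 * m ^ 2 = m ^ 4 := by ring
    rw [h, h4]
  have hone : (1 : R) ∉ m := by
    rw [← Ideal.ne_top_iff_one]
    exact (IsLocalRing.maximalIdeal.isMaximal R).ne_top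
  -- choose u ∈ m² \ m³
  obtain ⟨u, hu2, hu3⟩ : ∃ u, u ∈ m ^ 2 ∧ u ∉ m * m ^ 2 := by
    by_contra h
    push_neg at h
    have hle : m ^ 3 ≤ (⊥ : Ideal R) := by
      calc m ^ 3 = m * m ^ 2 := h23.symm
        _ ≤ m * (m * m ^ 2) := Ideal.mul_mono_right h
        _ = m * m ^ 3 := by rw [h23]
        _ = ⊥ := h33
    exact h3 (le_bot_iff.mp hle)
  -- spanning of m² by u mod m³
  have hspan2 : ∀ w ∈ m ^ 2, ∃ c : R, w - c * u ∈ m * m ^ 2 :=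
    fun w hw => aux_onedim (m ^ 2) hdim2 hu2 hu3 hw
  -- the annihilator of m
  set S : Ideal R := Submodule.colon (⊥ : Ideal R) m with hS
  have hmS : m * S = ⊥ := by
    refine le_bot_iff.mp (Ideal.mul_le.mpr fun p hp s hs => ?_)
    have := Submodule.mem_colon.mp hs p hp
    rwa [smul_eq_mul, mul_comm] at this
  have h3S : m ^ 3 ≤ S := by
    intro t ht
    refine Submodule.mem_colon.mpr fun p hp => ?_
    rw [smul_eq_mul]
    have h : t * p ∈ m ^ 3 * m := Ideal.mul_mem_mul ht hp
    rwa [show m ^ 3 * m = m ^ 4 by ring, h4] at h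
  -- any two elements of S are k-linearly dependent
  have hdep : ∀ v ∈ S, ∀ w ∈ S, ∃ a b : R, (a ∉ m ∨ b ∉ m) ∧ a * v + b * w = 0 := by
    intro v hv w hw
    by_cases hv0 : v = 0
    · exact ⟨1, 0, Or.inl hone, by simp [hv0]⟩
    · have hv' : v ∉ m * S := by
        rw [hmS, Submodule.mem_bot]; exact hv0
      obtain ⟨c, hc⟩ := aux_onedim S hdimann hv hv' hw
      rw [hmS, Submodule.mem_bot] at hc
      exact ⟨c, -1, Or.inr fun hn => hone (by simpa using m.neg_mem hn), by linear_combination -hc⟩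
  -- two independent elements of m
  obtain ⟨z0, z1, hz0m, hz1m, hP⟩ := aux_twodim m hdim1
  -- products with u land in S
  have hvS : z0 * u ∈ S := h3S (by
    have h : z0 * u ∈ m * m ^ 2 := Ideal.mul_mem_mul hz0m hu2
    rwa [h23] at h)
  have hwS : z1 * u ∈ S := h3S (by
    have h : z1 * u ∈ m * m ^ 2 := Ideal.mul_mem_mul hz1m hu2
    rwa [h23] at h)
  obtain ⟨a, bb, hab, habeq⟩ := hdep _ hvS _ hwS
  set x : R := a * z0 + bb * z1 with hxdef
  have hxu : x * u = 0 := by rw [hxdef]; linear_combination habeq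
  have hxm : x ∈ m := add_mem (m.mul_mem_left _ hz0m) (m.mul_mem_left _ hz1m)
  have hxm2 : x ∉ m ^ 2 := fun h => by
    rw [pow_two] at h
    rcases hP a bb h with ⟨h1, h2⟩
    tauto
  have hxann : ∀ p ∈ m ^ 2, x * p = 0 := by
    intro p hp
    obtain ⟨c, hc⟩ := hspan2 p hp
    have h1 : x * (p - c * u) ∈ m * m ^ 3 := Ideal.mul_mem_mul hxm (h23 ▸ hc)
    rw [h33, Submodule.mem_bot] at h1
    linear_combination h1 + c * hxu
  have huann : ∀ p ∈ m ^ 2, u * p = 0 := by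
    intro p hp
    have h1 : u * p ∈ m ^ 2 * m ^ 2 := Ideal.mul_mem_mul hu2 hp
    rwa [h22, Submodule.mem_bot] at h1
  -- unit lemma
  have hunit : ∀ y : R, y ∉ m → ∃ d : R, d * y = 1 := by
    intro y hy
    have hu : IsUnit y := by
      by_contra hnu
      exact hy ((IsLocalRing.mem_maximalIdeal _).mpr (mem_nonunits_iff.mpr hnu))
    obtain ⟨d, hd⟩ := hu.exists_left_inv
    exact ⟨d, hd⟩
  -- build infinitely many ideals
  obtain ⟨g, hg⟩ := Function.Surjective.hasRightInverse
    (Ideal.Quotient.mk_surjective (I := m))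
  apply Set.infinite_of_injective_forall_mem
    (f := fun q : R ⧸ m => Ideal.span {x + g q * u})
  · -- injectivity
    intro q q' h
    simp only at h
    have hmem : x + g q * u ∈ Ideal.span {x + g q' * u} := by
      rw [← h]; exact Ideal.mem_span_singleton_self _
    obtain ⟨r, hr⟩ := Ideal.mem_span_singleton'.mp hmem
    set c := g q with hcdef
    set c' := g q' with hc'def
    -- 1 - r ∈ m
    have hs : (1 : R) - r ∈ m := by
      by_contra hns
      obtain ⟨t, ht⟩ := hunit _ hns
      have he : ((1 : R) - r) * x = (r * c' - c) * u := by linear_combination -hr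
      have hxval : x = (t * (r * c' - c)) * u := by linear_combination t * he - x * ht
      exact hxm2 (hxval ▸ Ideal.mul_mem_left _ _ hu2)
    -- key membership
    have hkey : (c - c') * u ∈ m * Ideal.span {x} ⊔ m ^ 3 := by
      have h1 : (c - c') * u = -(((1 : R) - r) * x) - (((1 : R) - r) * c') * u := by
        linear_combination -hr
      rw [h1]
      refine sub_mem (neg_mem (Submodule.mem_sup_left
        (Ideal.mul_mem_mul hs (Ideal.mem_span_singleton_self x)))) ?_
      refine Submodule.mem_sup_right ?_
      have h2 : (((1 : R) - r) * c') * u ∈ m * m ^ 2 :=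
        Ideal.mul_mem_mul (m.mul_mem_right _ hs) hu2
      rwa [h23] at h2
    -- c - c' ∈ m
    have hcc : c - c' ∈ m := by
      by_contra hcc
      obtain ⟨t, ht⟩ := hunit _ hcc
      set J : Ideal R := m * Ideal.span {x} ⊔ m ^ 3 with hJ
      have huJ : u ∈ J := by
        have h1 : u = t * ((c - c') * u) := by linear_combination (-u) * ht
        rw [h1]
        exact J.mul_mem_left _ hkey
      have hm2J : m ^ 2 ≤ J := by
        intro w hw
        obtain ⟨e, he⟩ := hspan2 w hw
        have h1 : e * u ∈ J := J.mul_mem_left _ huJ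
        have h2 : w - e * u ∈ J := Submodule.mem_sup_right (h23 ▸ he)
        have h3' := add_mem h1 h2
        simpa using h3'
      have hxJ : m * (m * Ideal.span {x}) ≤ ⊥ := by
        rw [← mul_assoc, ← pow_two]
        refine Ideal.mul_le.mpr fun p hp y hy => ?_
        obtain ⟨t', ht'⟩ := Ideal.mem_span_singleton'.mp hy
        rw [Submodule.mem_bot]
        linear_combination t' * hxann p hp - p * ht'
      have hfin : m ^ 3 ≤ (⊥ : Ideal R) := by
        calc m ^ 3 = m * m ^ 2 := h23.symm
          _ ≤ m * J := Ideal.mul_mono_right hm2J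
          _ = m * (m * Ideal.span {x}) ⊔ m * m ^ 3 := by rw [hJ, Ideal.mul_sup]
          _ ≤ ⊥ := sup_le hxJ (le_of_eq h33)
      exact h3 (le_bot_iff.mp hfin)
    have hmk : Ideal.Quotient.mk m c = Ideal.Quotient.mk m c' :=
      (Ideal.Quotient.mk_eq_mk_iff_sub_mem _ _).mpr hcc
    rw [hcdef, hc'def, hg q, hg q'] at hmk
    exact hmk
  · -- membership
    intro q
    simp only [Set.mem_setOf_eq]
    rw [Ideal.span_le, Set.singleton_subset_iff]
    refine Submodule.mem_colon.mpr fun p hp => ?_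
    rw [smul_eq_mul, Submodule.mem_bot]
    have h1 := hxann p hp
    have h2 := huann p hp
    linear_combination h1 + g q * h2
end

section
/- Let (R, m) be a commutative Artinian local ring with maximal ideal m such that m⁴ = (0), m³ ≠ (0), the R/m-vector space Ann(m) has dimension 1, and the R/m-vector space m²/m³ has dimension 1. Then for every x ∈ m \ m², either m² ⊆ Rx or m² ⊆ Ann(x). -/
open IsLocalRing

-- auxiliary: a nonzero element of m² mod m³ generates m² together with m³
lemma aux_span (R : Type*) [CommRing R] [IsLocalRing R]
    (hdim2 : Module.finrank (R ⧸ maximalIdeal R)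
      ((↥(maximalIdeal R ^ 2)) ⧸
        (maximalIdeal R • (⊤ : Submodule R ↥(maximalIdeal R ^ 2)))) = 1)
    (z : R) (hz : z ∈ maximalIdeal R ^ 2) (hz3 : z ∉ maximalIdeal R ^ 3) :
    maximalIdeal R ^ 2 ≤ Ideal.span {z} ⊔ maximalIdeal R ^ 3 := by
  set m := maximalIdeal R
  set M := ↥(m ^ 2)
  set N : Submodule R M := m • ⊤
  letI : Field (R ⧸ m) := Ideal.Quotient.field m
  have hmap : N.map (m ^ 2).subtype = m ^ 3 := by
    rw [Submodule.map_smul'', Submodule.map_top, Submodule.range_subtype,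
      Ideal.smul_eq_mul, ← pow_succ']
  have hmem : ∀ w : M, (w : R) ∈ m ^ 3 ↔ w ∈ N := by
    intro w
    rw [← hmap]
    constructor
    · rintro ⟨u, hu, hu2⟩
      have : u = w := Subtype.ext hu2
      rwa [← this]
    · intro hw; exact ⟨w, hw, rfl⟩
  have hfd : FiniteDimensional (R ⧸ m) (M ⧸ N) := by
    apply FiniteDimensional.of_finrank_pos; rw [hdim2]; norm_num
  set zb : M ⧸ N := Submodule.Quotient.mk ⟨z, hz⟩
  have hzb : zb ≠ 0 := by
    intro h
    rw [Submodule.Quotient.mk_eq_zero] at h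
    exact hz3 ((hmem ⟨z, hz⟩).mpr h)
  have hspan : Submodule.span (R ⧸ m) {zb} = ⊤ := by
    apply Submodule.eq_top_of_finrank_eq
    rw [finrank_span_singleton hzb, hdim2]
  intro w hw
  have : (Submodule.Quotient.mk ⟨w, hw⟩ : M ⧸ N) ∈ Submodule.span (R ⧸ m) {zb} := by
    rw [hspan]; trivial
  rw [Submodule.mem_span_singleton] at this
  obtain ⟨c, hc⟩ := this
  obtain ⟨r, rfl⟩ := Ideal.Quotient.mk_surjective c
  have hc' : (Submodule.Quotient.mk (⟨w, hw⟩ : M) : M ⧸ N)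
      = Submodule.Quotient.mk (r • ⟨z, hz⟩) := hc.symm
  rw [Submodule.Quotient.eq] at hc'
  have hd : w - r * z ∈ m ^ 3 := (hmem _).mpr hc'
  have hwe : w = r * z + (w - r * z) := by ring
  rw [hwe]
  exact Submodule.add_mem_sup (Ideal.mem_span_singleton.mpr ⟨r, (mul_comm z r).symm⟩) hd

/-- Let (R, m) be a commutative Artinian local ring with m⁴ = (0),
m³ ≠ (0), v.dim_{R/m} Ann(m) = 1 and v.dim_{R/m} (m²/m³) = 1.  Then for every
x ∈ m \ m², either m² ⊆ Rx or m² ⊆ Ann(x). -/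
theorem stmt_12 (R : Type*) [CommRing R] [IsArtinianRing R] [IsLocalRing R]
    (h4 : maximalIdeal R ^ 4 = ⊥) (h3 : maximalIdeal R ^ 3 ≠ ⊥)
    (hdimann : Module.finrank (R ⧸ maximalIdeal R)
      ((↥(Submodule.colon (⊥ : Ideal R) (maximalIdeal R))) ⧸
        (maximalIdeal R •
          (⊤ : Submodule R ↥(Submodule.colon (⊥ : Ideal R) (maximalIdeal R))))) = 1)
    (hdim2 : Module.finrank (R ⧸ maximalIdeal R)
      ((↥(maximalIdeal R ^ 2)) ⧸
        (maximalIdeal R • (⊤ : Submodule R ↥(maximalIdeal R ^ 2)))) = 1) :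
    ∀ x ∈ maximalIdeal R, x ∉ maximalIdeal R ^ 2 →
      maximalIdeal R ^ 2 ≤ Ideal.span {x} ∨ ∀ a ∈ maximalIdeal R ^ 2, a * x = 0 := by
  intro x hx hx2
  set m := maximalIdeal R
  by_cases hcase : ∀ t ∈ m, x * t ∈ m ^ 3
  · right
    intro a ha
    have h1 : Ideal.span {x} * m ≤ m ^ 3 := by
      rw [Ideal.span_singleton_mul_le_iff]
      exact hcase
    have h2 : m ^ 2 * Ideal.span {x} ≤ ⊥ := by
      calc m ^ 2 * Ideal.span {x} = (Ideal.span {x} * m) * m := by ring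
        _ ≤ m ^ 3 * m := Ideal.mul_mono_left h1
        _ = m ^ 4 := by rw [← pow_succ]
        _ = ⊥ := h4
    have : a * x ∈ (⊥ : Ideal R) :=
      h2 (Ideal.mul_mem_mul ha (Ideal.mem_span_singleton_self x))
    simpa using this
  · left
    push_neg at hcase
    obtain ⟨t, ht, htz⟩ := hcase
    have hz : x * t ∈ m ^ 2 := by
      rw [pow_two]; exact Ideal.mul_mem_mul hx ht
    have key := aux_span R hdim2 (x * t) hz htz
    set z := x * t
    have hzx : Ideal.span {z} ≤ Ideal.span {x} := by
      rw [Ideal.span_singleton_le_span_singleton]; exact ⟨t, rfl⟩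
    -- m^3 ≤ span{z}
    have h3le : m ^ 3 ≤ Ideal.span {z} := by
      have : m ^ 3 = m * m ^ 2 := by ring
      rw [this]
      calc m * m ^ 2 ≤ m * (Ideal.span {z} ⊔ m ^ 3) := Ideal.mul_mono_right key
        _ = m * Ideal.span {z} ⊔ m * m ^ 3 := Ideal.mul_sup _ _ _
        _ = m * Ideal.span {z} ⊔ m ^ 4 := by rw [← pow_succ']
        _ = m * Ideal.span {z} := by rw [h4, sup_bot_eq]
        _ ≤ Ideal.span {z} := Ideal.mul_le_right
    calc m ^ 2 ≤ Ideal.span {z} ⊔ m ^ 3 := key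
      _ ≤ Ideal.span {x} := sup_le hzx (h3le.trans hzx)
end
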